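/- Let $\sigma \in (5/3, 2)$ and define, for $\mathrm{Re}(z) < 0$, $M(z) = \sum_{j=0}^2 c_j \int_0^\infty \big[(1+\eta)^z - 1\big]\,\eta^{-(\sigma - j/3)}\,d\eta$ with $c_0 = c_2 = 1$, $c_1 = 2$. Then $M$ extends meromorphically to $\mathbb{C}$ and is given by $M(z) = \frac{z}{\Gamma(1-z)} \sum_{j=0}^2 c_j\,\frac{\Gamma(2 + j/3 - \sigma)\,\Gamma(\sigma - j/3 - 1 - z)}{\sigma - j/3 - 1}$. -/

import Mathlib

open MeasureTheory Set Filter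




lemma eventually_ne_neg_nat {x : ℂ} (h : ∀ m : ℕ, x ≠ -m) :
    ∀ᶠ z in nhds x, ∀ m : ℕ, z ≠ -(m : ℂ) := by
  set N : ℕ := ⌈‖x‖⌉₊ + 1 with hNdef
  have hN : ‖x‖ + 1 ≤ N := by
    have := Nat.le_ceil (‖x‖)
    push_cast [hNdef]; linarith
  have hne : (Finset.range N).Nonempty := ⟨0, by simp [hNdef]⟩
  set ε := (Finset.range N).inf' hne (fun m => ‖x + m‖) with hεdef
  have hε : 0 < ε := by
    rw [hεdef, Finset.lt_inf'_iff]
    intro m _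
    have : x + m ≠ 0 := by
      intro h0; exact h m (by linear_combination h0)
    simpa using this
  have hδ : 0 < min ε 1 := lt_min hε one_pos
  filter_upwards [Metric.ball_mem_nhds x hδ] with z hz m hzm
  subst hzm
  rw [Metric.mem_ball, Complex.dist_eq] at hz
  by_cases hm : m < N
  · have h1 : ε ≤ ‖x + m‖ := Finset.inf'_le _ (Finset.mem_range.2 hm)
    have h2 : ‖-(m:ℂ) - x‖ = ‖x + m‖ := by
      rw [show -(m:ℂ) - x = -(x + m) by ring, norm_neg]
    have := lt_of_lt_of_le hz (min_le_left _ _)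
    rw [h2] at this; linarith
  · push_neg at hm
    have h2 : (m : ℝ) - ‖x‖ ≤ ‖-(m:ℂ) - x‖ := by
      have := norm_sub_norm_le (-(m:ℂ)) x
      simpa using this
    have h3 : ‖-(m:ℂ) - x‖ < 1 := lt_of_lt_of_le hz (min_le_right _ _)
    have h4 : (N : ℝ) ≤ m := by exact_mod_cast hm
    linarith

lemma analyticAt_Gamma_comp {g : ℂ → ℂ} {x : ℂ} (hg : Differentiable ℂ g)
    (h : ∀ m : ℕ, g x ≠ -m) : AnalyticAt ℂ (fun z => Complex.Gamma (g z)) x := by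
  rw [Complex.analyticAt_iff_eventually_differentiableAt]
  filter_upwards [(hg.continuous.tendsto x).eventually (eventually_ne_neg_nat h)] with z hz
  exact (Complex.differentiableAt_Gamma _ hz).comp z (hg z)

lemma meromorphicAt_Gamma_sub (a x : ℂ) :
    MeromorphicAt (fun z => Complex.Gamma (a - z)) x := by
  by_cases h : ∀ m : ℕ, a - x ≠ -m
  · exact (analyticAt_Gamma_comp (by fun_prop) h).meromorphicAt
  · push_neg at h
    obtain ⟨m, hm⟩ := h
    have hπ : (Real.pi : ℂ) ≠ 0 := by exact_mod_cast Real.pi_ne_zero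
    have hsin : AnalyticAt ℂ (fun z => Complex.sin (Real.pi * (a - z))) x := by
      rw [Complex.analyticAt_iff_eventually_differentiableAt]
      filter_upwards with z
      exact (Complex.differentiable_sin.comp (by fun_prop)).differentiableAt
    have hΓ2 : AnalyticAt ℂ (fun z => Complex.Gamma (1 - (a - z))) x := by
      apply analyticAt_Gamma_comp (by fun_prop)
      intro k hk
      rw [hm] at hk
      have : (1 : ℂ) + m + k = 0 := by linear_combination hk
      have hre : (1 : ℝ) + m + k = 0 := by exact_mod_cast congrArg Complex.re this
      have h1 : (0:ℝ) ≤ (m:ℝ) := Nat.cast_nonneg m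
      have h2 : (0:ℝ) ≤ (k:ℝ) := Nat.cast_nonneg k
      linarith
    have hmero : MeromorphicAt
        (fun z => (Real.pi : ℂ) / (Complex.sin (Real.pi * (a - z)) * Complex.Gamma (1 - (a - z)))) x :=
      (MeromorphicAt.const _ x).div ((hsin.meromorphicAt).mul hΓ2.meromorphicAt)
    apply hmero.congr
    have hball : Metric.ball x 1 ∈ nhdsWithin x {x}ᶜ :=
      nhdsWithin_le_nhds (Metric.ball_mem_nhds x one_pos)
    filter_upwards [hball, self_mem_nhdsWithin] with z hz1 hz2
    rw [Metric.mem_ball, Complex.dist_eq] at hz1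
    have hzx : z ≠ x := hz2
    set w := a - z with hw
    have hwint : ∀ k : ℤ, w ≠ k := by
      intro k hk
      have hzxeq : z - x = ((-(m:ℤ) - k : ℤ) : ℂ) := by
        push_cast
        have h' : a - x = -(m:ℂ) := hm
        linear_combination h' - hk
      have hk0 : (-(m:ℤ) - k) ≠ 0 := by
        intro h0
        apply hzx
        have h1 : z - x = 0 := by rw [hzxeq, h0]; simp
        linear_combination h1
      have : (1:ℝ) ≤ ‖z - x‖ := by
        rw [hzxeq, Complex.norm_intCast]
        exact_mod_cast Int.one_le_abs hk0
      linarith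
    have hsin0 : Complex.sin (Real.pi * w) ≠ 0 := by
      rw [Ne, Complex.sin_eq_zero_iff]
      rintro ⟨k, hk⟩
      apply hwint k
      have h1 : (Real.pi:ℂ) * w = (Real.pi:ℂ) * k := by rw [hk]; ring
      exact mul_left_cancel₀ hπ h1
    have hΓ0 : Complex.Gamma (1 - w) ≠ 0 := by
      apply Complex.Gamma_ne_zero
      intro j hj
      apply hwint (1 + j)
      push_cast
      linear_combination -hj
    have key := Complex.Gamma_mul_Gamma_one_sub w
    rw [eq_div_iff hsin0] at key
    rw [div_eq_iff (mul_ne_zero hsin0 hΓ0)]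
    linear_combination -key

lemma meromorphicAt_finsum {ι : Type*} (s : Finset ι) (f : ι → ℂ → ℂ) {x : ℂ}
    (h : ∀ i ∈ s, MeromorphicAt (f i) x) :
    MeromorphicAt (fun z => ∑ i ∈ s, f i z) x := by
  classical
  induction s using Finset.induction_on with
  | empty => simpa using (MeromorphicAt.const 0 x)
  | insert i t hne ih =>
      simp_rw [Finset.sum_insert hne]
      exact (h i (Finset.mem_insert_self i t)).add
        (ih fun j hj => h j (Finset.mem_insert_of_mem hj))


lemma ofReal_slit {x : ℝ} (hx : 0 < x) : (x : ℂ) ∈ Complex.slitPlane := by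
  simpa using hx

lemma hasDerivAt_cpow1 (z : ℂ) {t : ℝ} (ht : 0 < 1 + t) :
    HasDerivAt (fun t : ℝ => ((1 + t : ℝ) : ℂ) ^ z) (z * ((1 + t : ℝ) : ℂ) ^ (z - 1)) t := by
  have hslit : ((1:ℂ) + (t:ℂ)) ∈ Complex.slitPlane := by
    rw [show ((1:ℂ) + (t:ℂ)) = (((1 + t : ℝ)) : ℂ) by push_cast; ring]
    exact ofReal_slit ht
  have h1 : HasDerivAt (fun w : ℂ => (1 + w) ^ z) (z * ((1:ℂ) + (t:ℂ)) ^ (z - 1)) (t : ℂ) := by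
    simpa using ((hasDerivAt_id ((t:ℝ) : ℂ)).const_add 1).cpow_const hslit
  have key := h1.comp_ofReal
  simpa [← Complex.ofReal_one, ← Complex.ofReal_add] using key

lemma hasDerivAt_u (z : ℂ) {t : ℝ} (ht : 0 < 1 + t) :
    HasDerivAt (fun t : ℝ => ((1 + t : ℝ) : ℂ) ^ z - 1) (z * ((1 + t : ℝ) : ℂ) ^ (z - 1)) t :=
  (hasDerivAt_cpow1 z ht).sub_const 1

lemma norm_cpow_real {x : ℝ} (hx : 0 < x) (w : ℂ) : ‖(x : ℂ) ^ w‖ = x ^ w.re := by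
  rw [Complex.norm_cpow_eq_rpow_re_of_pos hx]

lemma contOn_cpow (w : ℂ) : ContinuousOn (fun t : ℝ => (t : ℂ) ^ w) (Ioi 0) := fun t ht =>
  (Complex.continuous_ofReal.continuousAt.cpow continuousAt_const
    (ofReal_slit ht)).continuousWithinAt

lemma contOn_cpow1 (w : ℂ) : ContinuousOn (fun t : ℝ => ((1 + t : ℝ) : ℂ) ^ w) (Ioi 0) :=
  fun t ht => (((Complex.continuous_ofReal.comp (by fun_prop)).continuousAt).cpow
    continuousAt_const (ofReal_slit (by have : (0:ℝ) < t := ht; linarith))).continuousWithinAt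

lemma norm_cpow_sub_one_le {z : ℂ} (hz : z.re ≤ 0) {η : ℝ} (hη : 0 ≤ η) :
    ‖((1 + η : ℝ) : ℂ) ^ z - 1‖ ≤ ‖z‖ * η := by
  have hderiv : ∀ t ∈ uIcc 0 η, HasDerivAt (fun t : ℝ => ((1 + t : ℝ) : ℂ) ^ z - 1)
      (z * ((1 + t : ℝ) : ℂ) ^ (z - 1)) t := by
    intro t ht
    rw [uIcc_of_le hη] at ht
    exact hasDerivAt_u z (by have := ht.1; linarith)
  have hint : IntervalIntegrable (fun t : ℝ => z * ((1 + t : ℝ) : ℂ) ^ (z - 1)) volume 0 η := by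
    apply ContinuousOn.intervalIntegrable
    apply continuousOn_const.mul
    intro t ht
    rw [uIcc_of_le hη] at ht
    have ht1 := ht.1
    exact (((Complex.continuous_ofReal.comp (by fun_prop)).continuousAt).cpow
      continuousAt_const (ofReal_slit (by linarith))).continuousWithinAt
  have hftc := intervalIntegral.integral_eq_sub_of_hasDerivAt hderiv hint
  have h0 : (((1 + 0 : ℝ) : ℂ)) ^ z - 1 = 0 := by norm_num
  rw [h0, sub_zero] at hftc
  rw [← hftc]
  have key := intervalIntegral.norm_integral_le_of_norm_le_const (C := ‖z‖)
    (f := fun t : ℝ => z * ((1 + t : ℝ) : ℂ) ^ (z - 1)) (a := 0) (b := η) ?_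
  · calc ‖∫ t in (0:ℝ)..η, z * ((1 + t : ℝ) : ℂ) ^ (z - 1)‖ ≤ ‖z‖ * |η - 0| := key
      _ = ‖z‖ * η := by rw [sub_zero, abs_of_nonneg hη]
  · intro t ht
    rw [uIoc_of_le hη] at ht
    have ht1 := ht.1
    have ht0 : (0:ℝ) < 1 + t := by linarith
    rw [norm_mul, norm_cpow_real ht0]
    have h1 : (1 + t) ^ (z - 1).re ≤ 1 := by
      apply Real.rpow_le_one_of_one_le_of_nonpos (by linarith)
      simp [Complex.sub_re]; linarith
    nlinarith [norm_nonneg z]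

lemma aux_rpow {η : ℝ} (hη : 0 < η) (s : ℝ) : η * η ^ (1 - s) = η ^ (2 - s) := by
  rw [show (2:ℝ) - s = 1 + (1 - s) by ring, Real.rpow_add hη, Real.rpow_one]

lemma rpow_int_Ioc {r : ℝ} (hr : -1 < r) :
    IntegrableOn (fun η : ℝ => η ^ r) (Ioc (0:ℝ) 1) := by
  have := intervalIntegral.intervalIntegrable_rpow' (a := 0) (b := 1) hr
  rwa [intervalIntegrable_iff_integrableOn_Ioc_of_le zero_le_one] at this

lemma integrableOn_I2 {s : ℝ} (hs1 : 1 < s) (hs2 : s < 2) {z : ℂ} (hz : z.re < 0) :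
    IntegrableOn (fun η : ℝ => ((1 + η : ℝ) : ℂ) ^ (z - 1) * (η : ℂ) ^ (-(s:ℂ) + 1)) (Ioi 0) := by
  have hmeas : ∀ t : Set ℝ, t ⊆ Ioi 0 → MeasurableSet t →
      AEStronglyMeasurable (fun η : ℝ => ((1 + η : ℝ) : ℂ) ^ (z - 1) * (η : ℂ) ^ (-(s:ℂ) + 1))
        (volume.restrict t) := by
    intro t ht hmt
    exact (((contOn_cpow1 (z-1)).mul (contOn_cpow (-(s:ℂ)+1))).mono ht).aestronglyMeasurable hmt
  rw [← Ioc_union_Ioi_eq_Ioi (zero_le_one' ℝ), integrableOn_union]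
  constructor
  · apply Integrable.mono' (rpow_int_Ioc (r := 1 - s) (by linarith))
      (hmeas _ (Ioc_subset_Ioi_self) measurableSet_Ioc)
    filter_upwards [ae_restrict_mem measurableSet_Ioc] with η hη
    have hη0 : (0:ℝ) < η := hη.1
    rw [norm_mul, norm_cpow_real (by linarith) , norm_cpow_real hη0]
    have h1 : (1 + η) ^ (z - 1).re ≤ 1 := by
      apply Real.rpow_le_one_of_one_le_of_nonpos (by linarith)
      simp [Complex.sub_re]; linarith
    have h2 : ((-(s:ℂ) + 1)).re = 1 - s := by simp; ring
    rw [h2]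
    nlinarith [Real.rpow_nonneg hη0.le (1 - s)]
  · apply Integrable.mono' (integrableOn_Ioi_rpow_of_lt (a := z.re - s) (by linarith) one_pos)
      (hmeas _ (Ioi_subset_Ioi zero_le_one) measurableSet_Ioi)
    filter_upwards [ae_restrict_mem measurableSet_Ioi] with η hη
    have hη1 : (1:ℝ) < η := hη
    have hη0 : (0:ℝ) < η := by linarith
    rw [norm_mul, norm_cpow_real (by linarith), norm_cpow_real hη0]
    have h2 : ((-(s:ℂ) + 1)).re = 1 - s := by simp; ring
    have h3 : (z - 1).re = z.re - 1 := by simp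
    rw [h2, h3]
    have h4 : (1 + η) ^ (z.re - 1) ≤ η ^ (z.re - 1) := by
      apply Real.rpow_le_rpow_of_nonpos hη0 (by linarith) (by linarith)
    calc (1 + η) ^ (z.re - 1) * η ^ (1 - s) ≤ η ^ (z.re - 1) * η ^ (1 - s) := by
          apply mul_le_mul_of_nonneg_right h4 (Real.rpow_nonneg hη0.le _)
      _ = η ^ (z.re - s) := by
          rw [← Real.rpow_add hη0]; ring_nf

lemma integrableOn_I1 {s : ℝ} (hs1 : 1 < s) (hs2 : s < 2) {z : ℂ} (hz : z.re < 0) :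
    IntegrableOn (fun η : ℝ => (((1 + η : ℝ) : ℂ) ^ z - 1) * (η : ℂ) ^ (-(s:ℂ))) (Ioi 0) := by
  have hmeas : ∀ t : Set ℝ, t ⊆ Ioi 0 → MeasurableSet t →
      AEStronglyMeasurable (fun η : ℝ => (((1 + η : ℝ) : ℂ) ^ z - 1) * (η : ℂ) ^ (-(s:ℂ)))
        (volume.restrict t) := by
    intro t ht hmt
    exact ((((contOn_cpow1 z).sub continuousOn_const).mul
      (contOn_cpow (-(s:ℂ)))).mono ht).aestronglyMeasurable hmt
  rw [← Ioc_union_Ioi_eq_Ioi (zero_le_one' ℝ), integrableOn_union]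
  have hns : (-(s:ℂ)).re = -s := by simp
  constructor
  · apply Integrable.mono' ((rpow_int_Ioc (r := 1 - s) (by linarith)).const_mul ‖z‖)
      (hmeas _ (Ioc_subset_Ioi_self) measurableSet_Ioc)
    filter_upwards [ae_restrict_mem measurableSet_Ioc] with η hη
    have hη0 : (0:ℝ) < η := hη.1
    rw [norm_mul, norm_cpow_real hη0, hns]
    calc ‖((1 + η : ℝ) : ℂ) ^ z - 1‖ * η ^ (-s) ≤ (‖z‖ * η) * η ^ (-s) := by
          apply mul_le_mul_of_nonneg_right (norm_cpow_sub_one_le hz.le hη0.le)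
            (Real.rpow_nonneg hη0.le _)
      _ = ‖z‖ * η ^ (1 - s) := by
          rw [mul_assoc, show (1:ℝ) - s = 1 + (-s) by ring, Real.rpow_add hη0, Real.rpow_one]
  · apply Integrable.mono'
      ((integrableOn_Ioi_rpow_of_lt (a := -s) (by linarith) one_pos).const_mul 2)
      (hmeas _ (Ioi_subset_Ioi zero_le_one) measurableSet_Ioi)
    filter_upwards [ae_restrict_mem measurableSet_Ioi] with η hη
    have hη1 : (1:ℝ) < η := hη
    have hη0 : (0:ℝ) < η := by linarith
    rw [norm_mul, norm_cpow_real hη0, hns]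
    have h1 : ‖((1 + η : ℝ) : ℂ) ^ z - 1‖ ≤ 2 := by
      calc ‖((1 + η : ℝ) : ℂ) ^ z - 1‖ ≤ ‖((1 + η : ℝ) : ℂ) ^ z‖ + 1 := by
            simpa using norm_sub_le (((1 + η : ℝ) : ℂ) ^ z) 1
        _ ≤ 1 + 1 := by
            have := norm_cpow_real (x := 1 + η) (by linarith) z
            rw [this]
            have : (1 + η) ^ z.re ≤ 1 :=
              Real.rpow_le_one_of_one_le_of_nonpos (by linarith) hz.le
            linarith
        _ = 2 := by norm_num
    apply mul_le_mul_of_nonneg_right h1 (Real.rpow_nonneg hη0.le _)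

lemma step_ibp {s : ℝ} (hs1 : 1 < s) (hs2 : s < 2) {z : ℂ} (hz : z.re < 0) :
    ∫ η in Ioi (0:ℝ), (((1 + η : ℝ) : ℂ) ^ z - 1) * (η : ℂ) ^ (-(s:ℂ))
      = (z / ((s:ℂ) - 1)) *
        ∫ η in Ioi (0:ℝ), ((1 + η : ℝ) : ℂ) ^ (z - 1) * (η : ℂ) ^ (-(s:ℂ) + 1) := by
  have hsne : (-(s:ℂ) + 1) ≠ 0 := by
    intro h
    have : ((1 - s : ℝ) : ℂ) = 0 := by push_cast; linear_combination h
    have := Complex.ofReal_eq_zero.mp this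
    linarith
  have hnorm1 : ‖(-(s:ℂ) + 1)‖ = s - 1 := by
    rw [show (-(s:ℂ) + 1) = ((1 - s : ℝ) : ℂ) by push_cast; ring, Complex.norm_real,
      Real.norm_eq_abs, abs_of_nonpos (by linarith)]
    ring
  set u : ℝ → ℂ := fun η => ((1 + η : ℝ) : ℂ) ^ z - 1 with hu_def
  set v : ℝ → ℂ := fun η => (η : ℂ) ^ (-(s:ℂ) + 1) / (-(s:ℂ) + 1) with hv_def
  set u' : ℝ → ℂ := fun η => z * ((1 + η : ℝ) : ℂ) ^ (z - 1) with hu'_def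
  set v' : ℝ → ℂ := fun η => (η : ℂ) ^ (-(s:ℂ)) with hv'_def
  have hu : ∀ x ∈ Ioi (0:ℝ), HasDerivAt u (u' x) x := fun x hx =>
    hasDerivAt_u z (by have : (0:ℝ) < x := hx; linarith)
  have hv : ∀ x ∈ Ioi (0:ℝ), HasDerivAt v (v' x) x := fun x hx =>
    hasDerivAt_ofReal_cpow_const' (ne_of_gt hx) (fun h => hsne (by rw [h]; ring))
  -- norms of u and v
  have hvnorm : ∀ x : ℝ, 0 < x → ‖v x‖ = x ^ (1 - s) / (s - 1) := by
    intro x hx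
    rw [hv_def]
    simp only [norm_div, hnorm1, norm_cpow_real hx]
    congr 2
    simp; ring
  have hunorm : ∀ x : ℝ, 0 ≤ x → ‖u x‖ ≤ ‖z‖ * x := fun x hx => norm_cpow_sub_one_le hz.le hx
  have h_zero : Tendsto (u * v) (nhdsWithin 0 (Ioi 0)) (nhds (0:ℂ)) := by
    apply squeeze_zero_norm' (a := fun η : ℝ => (‖z‖ / (s - 1)) * η ^ (2 - s))
    · filter_upwards [self_mem_nhdsWithin] with η hη
      have hη0 : (0:ℝ) < η := hη
      rw [Pi.mul_apply, norm_mul, hvnorm η hη0]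
      calc ‖u η‖ * (η ^ (1 - s) / (s - 1)) ≤ (‖z‖ * η) * (η ^ (1 - s) / (s - 1)) := by
            exact mul_le_mul_of_nonneg_right (hunorm η hη0.le)
              (div_nonneg (Real.rpow_nonneg hη0.le _) (by linarith))
        _ = (‖z‖ / (s - 1)) * (η * η ^ (1 - s)) := by ring
        _ = (‖z‖ / (s - 1)) * η ^ (2 - s) := by rw [aux_rpow hη0]
    · have h := (Real.continuousAt_rpow_const 0 (2 - s) (Or.inr (by linarith))).tendsto
      rw [Real.zero_rpow (by intro h0; linarith)] at h
      have h2 := h.const_mul (‖z‖ / (s - 1))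
      rw [mul_zero] at h2
      exact h2.mono_left nhdsWithin_le_nhds
  have h_infty : Tendsto (u * v) atTop (nhds (0:ℂ)) := by
    apply squeeze_zero_norm' (a := fun η : ℝ => (2 / (s - 1)) * η ^ (1 - s))
    · filter_upwards [eventually_gt_atTop 0] with η hη0
      rw [Pi.mul_apply, norm_mul, hvnorm η hη0]
      have h1 : ‖u η‖ ≤ 2 := by
        rw [hu_def]
        calc ‖((1 + η : ℝ) : ℂ) ^ z - 1‖ ≤ ‖((1 + η : ℝ) : ℂ) ^ z‖ + 1 := by
              simpa using norm_sub_le (((1 + η : ℝ) : ℂ) ^ z) 1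
          _ ≤ 1 + 1 := by
              rw [norm_cpow_real (by linarith)]
              have : (1 + η) ^ z.re ≤ 1 :=
                Real.rpow_le_one_of_one_le_of_nonpos (by linarith) hz.le
              linarith
          _ = 2 := by norm_num
      calc ‖u η‖ * (η ^ (1 - s) / (s - 1)) ≤ 2 * (η ^ (1 - s) / (s - 1)) := by
            exact mul_le_mul_of_nonneg_right h1
              (div_nonneg (Real.rpow_nonneg hη0.le _) (by linarith))
        _ = (2 / (s - 1)) * η ^ (1 - s) := by ring
    · have h := tendsto_rpow_neg_atTop (y := s - 1) (by linarith)
      have h2 := h.const_mul (2 / (s - 1))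
      rw [mul_zero] at h2
      have : (fun η : ℝ => (2 / (s - 1)) * η ^ (-(s - 1))) = fun η : ℝ => (2 / (s - 1)) * η ^ (1 - s) := by
        funext η; congr 1; ring_nf
      rwa [this] at h2
  have huv' : IntegrableOn (u * v') (Ioi (0:ℝ)) := integrableOn_I1 hs1 hs2 hz
  have hu'v : IntegrableOn (u' * v) (Ioi (0:ℝ)) := by
    have h2 := (integrableOn_I2 hs1 hs2 hz).const_mul (z / (-(s:ℂ) + 1))
    apply h2.congr
    filter_upwards with η
    rw [Pi.mul_apply, hu'_def, hv_def]
    ring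
  have hibp := integral_Ioi_mul_deriv_eq_deriv_mul hu hv huv' hu'v h_zero h_infty
  rw [hibp]
  have h3 : ∫ x in Ioi (0:ℝ), u' x * v x
      = (z / (-(s:ℂ) + 1)) * ∫ η in Ioi (0:ℝ), ((1 + η : ℝ) : ℂ) ^ (z - 1) * (η : ℂ) ^ (-(s:ℂ) + 1) := by
    rw [← integral_const_mul]
    apply setIntegral_congr_fun measurableSet_Ioi
    intro η hη
    rw [hu'_def, hv_def]
    ring
  rw [h3]
  have hs1c : (s:ℂ) - 1 ≠ 0 := by
    intro h
    have : ((s - 1 : ℝ) : ℂ) = 0 := by push_cast; linear_combination h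
    have := Complex.ofReal_eq_zero.mp this
    linarith
  have h4 : z / (-(s:ℂ) + 1) = -(z / ((s:ℂ) - 1)) := by
    field_simp
    ring
  rw [h4]
  ring


lemma beta2 {p q : ℂ} (hp : 0 < p.re) (hq : 0 < q.re) :
    ∫ t in Ioi (0:ℝ), (t : ℂ) ^ (p - 1) * ((1 + t : ℝ) : ℂ) ^ (-(p + q))
      = Complex.Gamma p * Complex.Gamma q / Complex.Gamma (p + q) := by
  set f : ℝ → ℝ := fun x => x / (1 - x) with hf_def
  set g : ℝ → ℂ := fun t => (t : ℂ) ^ (p - 1) * ((1 + t : ℝ) : ℂ) ^ (-(p + q)) with hg_def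
  have hf' : ∀ x ∈ Ioo (0:ℝ) 1, HasDerivWithinAt f (((1 - x)^2)⁻¹) (Ioo (0:ℝ) 1) x := by
    intro x hx
    have h1x : (1:ℝ) - x ≠ 0 := by have := hx.2; intro h; linarith
    have hd : HasDerivAt f ((1 * (1 - x) - x * (-1)) / (1 - x)^2) x :=
      (hasDerivAt_id x).div ((hasDerivAt_id x).const_sub 1) h1x
    have heq : (1 * (1 - x) - x * (-1)) / (1 - x)^2 = ((1 - x)^2)⁻¹ := by
      field_simp
      ring
    rw [heq] at hd
    exact hd.hasDerivWithinAt
  have hinj : InjOn f (Ioo (0:ℝ) 1) := by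
    intro x hx y hy hxy
    have h1x : (1:ℝ) - x ≠ 0 := by have := hx.2; intro h; linarith
    have h1y : (1:ℝ) - y ≠ 0 := by have := hy.2; intro h; linarith
    rw [hf_def] at hxy
    field_simp at hxy
    linarith
  have himg : f '' (Ioo (0:ℝ) 1) = Ioi (0:ℝ) := by
    ext t
    constructor
    · rintro ⟨x, hx, rfl⟩
      exact div_pos hx.1 (by have := hx.2; linarith)
    · intro ht
      have ht0 : (0:ℝ) < t := ht
      refine ⟨t / (1 + t), ⟨div_pos ht0 (by linarith), ?_⟩, ?_⟩
      · rw [div_lt_one (by linarith)]; linarith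
      · show t / (1 + t) / (1 - t / (1 + t)) = t
        have h1 : (1:ℝ) - t / (1 + t) = 1 / (1 + t) := by
          field_simp
          ring
        rw [h1]
        field_simp
  have hsub := integral_image_eq_integral_abs_deriv_smul measurableSet_Ioo hf' hinj g
  rw [himg] at hsub
  rw [hsub]
  have heq : ∫ x in Ioo (0:ℝ) 1, |((1 - x)^2)⁻¹| • g (f x)
      = ∫ x in Ioo (0:ℝ) 1, (x : ℂ) ^ (p - 1) * ((1 - x : ℝ) : ℂ) ^ (q - 1) := by
    apply setIntegral_congr_fun measurableSet_Ioo
    intro x hx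
    have hx0 : (0:ℝ) < x := hx.1
    have hr0 : (0:ℝ) < 1 - x := by have := hx.2; linarith
    set R : ℂ := ((1 - x : ℝ) : ℂ) with hR_def
    have hR0 : R ≠ 0 := Complex.ofReal_ne_zero.mpr (ne_of_gt hr0)
    have harg : R.arg ≠ Real.pi := by
      rw [hR_def, Complex.arg_ofReal_of_nonneg hr0.le]
      exact Real.pi_ne_zero.symm
    have hinvcast : (((1 - x)⁻¹ : ℝ) : ℂ) = R⁻¹ := by rw [hR_def]; push_cast; ring
    have hfx : f x = x * (1 - x)⁻¹ := by rw [hf_def]; ring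
    have h1fx : (1 : ℝ) + f x = (1 - x)⁻¹ := by
      rw [hf_def]; field_simp; ring
    have e1 : ((f x : ℝ) : ℂ) ^ (p - 1) = (x : ℂ) ^ (p - 1) * R ^ (-(p - 1)) := by
      rw [hfx, Complex.ofReal_mul,
        Complex.mul_cpow_ofReal_nonneg hx0.le (by positivity) (p - 1)]
      congr 1
      rw [hinvcast, Complex.inv_cpow _ _ harg, ← Complex.cpow_neg]
    have e2 : ((1 + f x : ℝ) : ℂ) ^ (-(p + q)) = R ^ (p + q) := by
      rw [h1fx, hinvcast, Complex.inv_cpow _ _ harg, ← Complex.cpow_neg, neg_neg]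
    have hsm : |((1 - x)^2)⁻¹| • (g (f x))
        = (((((1 - x)^2)⁻¹ : ℝ)) : ℂ) * g (f x) := by
      rw [abs_of_pos (by positivity), Complex.real_smul]
    show |((1 - x) ^ 2)⁻¹| • g (f x) = (x : ℂ) ^ (p - 1) * ((1 - x : ℝ) : ℂ) ^ (q - 1)
    rw [hsm]
    show ((((1 - x)^2)⁻¹ : ℝ) : ℂ) * (((f x : ℝ) : ℂ) ^ (p - 1) * ((1 + f x : ℝ) : ℂ) ^ (-(p + q)))
      = (x : ℂ) ^ (p - 1) * ((1 - x : ℝ) : ℂ) ^ (q - 1)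
    rw [e1, e2]
    have hc2 : ((((1 - x)^2)⁻¹ : ℝ) : ℂ) = (R ^ (2:ℕ))⁻¹ := by
      rw [hR_def]; push_cast; ring
    rw [hc2]
    have hpow : (R ^ (2:ℕ))⁻¹ * ((x : ℂ) ^ (p - 1) * R ^ (-(p - 1)) * R ^ (p + q))
        = (x : ℂ) ^ (p - 1) * R ^ (q - 1) := by
      have h1 : R ^ (-(p - 1)) * R ^ (p + q) = R ^ (q + 1) := by
        rw [← Complex.cpow_add _ _ hR0]; ring_nf
      have h2 : R ^ (q + 1) = R ^ (q - 1) * R ^ (2:ℂ) := by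
        rw [← Complex.cpow_add _ _ hR0]; ring_nf
      have h3 : R ^ (2:ℂ) = R ^ (2:ℕ) := by
        rw [show ((2:ℂ)) = ((2:ℕ) : ℂ) by norm_num, Complex.cpow_natCast]
      rw [mul_assoc, h1, h2, h3]
      field_simp
    rw [← hpow]
  rw [heq]
  have hbeta : ∫ x in Ioo (0:ℝ) 1, (x : ℂ) ^ (p - 1) * ((1 - x : ℝ) : ℂ) ^ (q - 1)
      = Complex.betaIntegral p q := by
    rw [Complex.betaIntegral, intervalIntegral.integral_of_le zero_le_one,
      integral_Ioc_eq_integral_Ioo]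
    apply setIntegral_congr_fun measurableSet_Ioo
    intro x _
    push_cast
    ring
  rw [hbeta]
  have hG := Complex.Gamma_mul_Gamma_eq_betaIntegral hp hq
  have hGne : Complex.Gamma (p + q) ≠ 0 :=
    Complex.Gamma_ne_zero_of_re_pos (by rw [Complex.add_re]; linarith)
  rw [eq_div_iff hGne, hG]
  ring

lemma key_integral {s : ℝ} (hs1 : 1 < s) (hs2 : s < 2) {z : ℂ} (hz : z.re < 0) :
    ∫ η in Ioi (0:ℝ), (((1 + η : ℝ) : ℂ) ^ z - 1) * ((η ^ (-s) : ℝ) : ℂ)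
      = z / Complex.Gamma (1 - z) *
        ((Real.Gamma (2 - s) : ℂ) * Complex.Gamma ((s:ℂ) - 1 - z) / ((s:ℂ) - 1)) := by
  have hstep0 : ∫ η in Ioi (0:ℝ), (((1 + η : ℝ) : ℂ) ^ z - 1) * ((η ^ (-s) : ℝ) : ℂ)
      = ∫ η in Ioi (0:ℝ), (((1 + η : ℝ) : ℂ) ^ z - 1) * (η : ℂ) ^ (-(s:ℂ)) := by
    apply setIntegral_congr_fun measurableSet_Ioi
    intro η hη
    have hη0 : (0:ℝ) < η := hη
    show (((1 + η : ℝ) : ℂ) ^ z - 1) * ((η ^ (-s) : ℝ) : ℂ)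
      = (((1 + η : ℝ) : ℂ) ^ z - 1) * (η : ℂ) ^ (-(s:ℂ))
    rw [Complex.ofReal_cpow hη0.le (-s), Complex.ofReal_neg]
  rw [hstep0, step_ibp hs1 hs2 hz]
  have hp : 0 < ((2:ℂ) - s).re := by
    simp only [Complex.sub_re, Complex.ofReal_re]
    norm_num; linarith
  have hq : 0 < ((s:ℂ) - 1 - z).re := by
    simp only [Complex.sub_re, Complex.ofReal_re, Complex.one_re]
    linarith
  have hJ : ∫ η in Ioi (0:ℝ), ((1 + η : ℝ) : ℂ) ^ (z - 1) * (η : ℂ) ^ (-(s:ℂ) + 1)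
      = Complex.Gamma ((2:ℂ) - s) * Complex.Gamma ((s:ℂ) - 1 - z) / Complex.Gamma (1 - z) := by
    rw [show (1:ℂ) - z = ((2:ℂ) - s) + ((s:ℂ) - 1 - z) by ring, ← beta2 hp hq]
    apply setIntegral_congr_fun measurableSet_Ioi
    intro η hη
    show ((1 + η : ℝ) : ℂ) ^ (z - 1) * (η : ℂ) ^ (-(s:ℂ) + 1)
      = (η : ℂ) ^ ((((2:ℂ) - s)) - 1) * ((1 + η : ℝ) : ℂ) ^ (-(((2:ℂ) - s) + ((s:ℂ) - 1 - z)))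
    rw [show z - 1 = -((((2:ℂ) - s) + ((s:ℂ) - 1 - z))) by ring,
      show -(s:ℂ) + 1 = ((2:ℂ) - s) - 1 by ring]
    ring
  rw [hJ]
  rw [show ((Real.Gamma (2 - s) : ℝ) : ℂ) = Complex.Gamma ((2:ℂ) - s) by
    rw [← Complex.Gamma_ofReal, Complex.ofReal_sub, Complex.ofReal_ofNat]]
  ring


/-- The coefficients `c₀ = c₂ = 1`, `c₁ = 2`. -/
noncomputable def cCoef : ℕ → ℝ := fun j => if j = 1 then 2 else 1

/-- The meromorphic extension
`M(z) = (z/Γ(1-z)) ∑_{j=0}^{2} c_j Γ(2+j/3-σ) Γ(σ-j/3-1-z) / (σ-j/3-1)`. -/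
noncomputable def Mext (σ : ℝ) (z : ℂ) : ℂ :=
  z / Complex.Gamma (1 - z) *
    ∑ j ∈ Finset.range 3,
      (cCoef j : ℂ) * (Real.Gamma (2 + (j : ℝ) / 3 - σ) : ℂ)
        * Complex.Gamma ((σ : ℂ) - (j : ℝ) / 3 - 1 - z) / ((σ : ℂ) - (j : ℝ) / 3 - 1)

/-- for `σ ∈ (5/3,2)` and `Re z < 0`,
`M(z) = ∑_{j=0}^2 c_j ∫_0^∞ [(1+η)^z - 1] η^{-(σ-j/3)} dη` coincides with the formula
`Mext σ z`, and `Mext σ` is meromorphic on all of `ℂ`. -/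
theorem stmt11 (σ : ℝ) (hσ : σ ∈ Ioo (5/3 : ℝ) 2) :
    (∀ z : ℂ, z.re < 0 →
      (∑ j ∈ Finset.range 3, (cCoef j : ℂ) *
        ∫ η in Ioi (0:ℝ), (((1 + η : ℝ) : ℂ) ^ z - 1) * ((η ^ (-(σ - (j : ℝ) / 3)) : ℝ) : ℂ))
        = Mext σ z) ∧
    MeromorphicOn (Mext σ) Set.univ := by
  obtain ⟨hσ1, hσ2⟩ := hσ
  constructor
  · intro z hz
    rw [Mext, Finset.mul_sum]
    apply Finset.sum_congr rfl
    intro j hj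
    have hjlt : j < 3 := Finset.mem_range.mp hj
    have hj3 : (j:ℝ) ≤ 2 := by exact_mod_cast Nat.lt_succ_iff.mp hjlt
    have hj0 : (0:ℝ) ≤ (j:ℝ) := Nat.cast_nonneg j
    have hs1 : 1 < σ - (j:ℝ)/3 := by linarith
    have hs2 : σ - (j:ℝ)/3 < 2 := by linarith
    have hkey := key_integral hs1 hs2 hz
    rw [hkey]
    have e1 : (2:ℝ) - (σ - (j:ℝ)/3) = 2 + (j:ℝ)/3 - σ := by ring
    have e2 : (((σ - (j:ℝ)/3 : ℝ)):ℂ) - 1 - z = (σ : ℂ) - (j : ℝ) / 3 - 1 - z := by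
      push_cast; ring
    have e3 : (((σ - (j:ℝ)/3 : ℝ)):ℂ) - 1 = (σ : ℂ) - (j : ℝ) / 3 - 1 := by
      push_cast; ring
    rw [e1, e2, e3]
    ring
  · intro x _
    apply MeromorphicAt.mul
    · exact MeromorphicAt.div (analyticAt_id.meromorphicAt) (meromorphicAt_Gamma_sub 1 x)
    · apply meromorphicAt_finsum
      intro j _
      exact (((MeromorphicAt.const _ x).mul
        (meromorphicAt_Gamma_sub ((σ : ℂ) - (j : ℝ) / 3 - 1) x))).div (MeromorphicAt.const _ x)
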